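/- Let sch_ν(i) denote the number of ν-Schröder paths with exactly i diagonal steps and Nar_ν(j) the number of ν-Dyck paths with exactly j valleys. If ν begins with a north step and ends with an east step, then N_ν(x+1) = Σ_{i≥0} sch_ν(i) x^i, where N_ν(x) = Σ_{j≥0} Nar_ν(j) x^j. -/

import Mathlib

/-- Steps of a (Schröder) lattice path: north, east, diagonal. -/
inductive Step : Type
  | N | E | D
deriving DecidableEq, Repr

/-- Total horizontal displacement of a path. -/
def eLen (p : List Step) : ℕ := p.count Step.E + p.count Step.D

/-- Total vertical displacement of a path. -/
def nLen (p : List Step) : ℕ := p.count Step.N + p.count Step.D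

/-- A lattice path uses only `N` and `E` steps. -/
def IsLatticePath (ν : List Step) : Prop := Step.D ∉ ν

/-- `colVal p x` is twice the starting height of the step of `p` crossing the vertical
strip between abscissas `x` and `x+1`, plus `1` if that step is diagonal.  Comparing these
values columnwise is equivalent to comparing the heights of the paths over each strip. -/
def colVal : List Step → ℕ → ℕ
  | [], _ => 0
  | Step.N :: p, x => colVal p x + 2
  | Step.E :: _, 0 => 0
  | Step.E :: p, x+1 => colVal p x
  | Step.D :: _, 0 => 1
  | Step.D :: p, x+1 => colVal p x + 2

/-- `π` stays weakly above `ρ` (same endpoints intended). -/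
def WeaklyAbove (π ρ : List Step) : Prop := ∀ x, colVal ρ x ≤ colVal π x

/-- Replace every peak (consecutive `NE`) of a path by a diagonal step; applied to `ν`
this gives the path `μ` of the large ν-Schröder path definition. -/
def cutPeaks : List Step → List Step
  | [] => []
  | Step.N :: Step.E :: p => Step.D :: cutPeaks p
  | s :: p => s :: cutPeaks p

/-- A ν-Dyck path: an `N,E` path with the same endpoints as `ν` staying weakly above `ν`. -/
def IsNuDyck (ν π : List Step) : Prop :=
  Step.D ∉ π ∧ eLen π = eLen ν ∧ nLen π = nLen ν ∧ WeaklyAbove π ν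

/-- A (small) ν-Schröder path: an `N,E,D` path with the same endpoints as `ν` staying weakly
above `ν` (this automatically forbids diagonal steps on the ν-diagonal). -/
def IsSmallSchroder (ν π : List Step) : Prop :=
  eLen π = eLen ν ∧ nLen π = nLen ν ∧ WeaklyAbove π ν

/-- A large ν-Schröder path: an `N,E,D` path with the same endpoints as `ν` staying weakly
above the path obtained from `ν` by replacing each peak by a diagonal step. -/
def IsLargeSchroder (ν π : List Step) : Prop :=
  eLen π = eLen ν ∧ nLen π = nLen ν ∧ WeaklyAbove π (cutPeaks ν)

/-- Number of peaks (consecutive `NE` pairs). -/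
def peaks (p : List Step) : ℕ := (p.zip p.tail).count (Step.N, Step.E)

/-- Number of valleys (consecutive `EN` pairs). -/
def valleys (p : List Step) : ℕ := (p.zip p.tail).count (Step.E, Step.N)

/-- Lattice points at which valleys of a path occur (starting the path at `(x,y)`). -/
def valleyPts : List Step → ℕ → ℕ → List (ℕ × ℕ)
  | [], _, _ => []
  | Step.E :: p, x, y =>
      (if p.head? = some Step.N then [(x+1, y)] else []) ++ valleyPts p (x+1) y
  | Step.N :: p, x, y => valleyPts p x (y+1)
  | Step.D :: p, x, y => valleyPts p (x+1) (y+1)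

/-- Lattice points at which high peaks (peaks strictly above `ν`) of a path occur. -/
def highPeakPts (ν : List Step) : List Step → ℕ → ℕ → List (ℕ × ℕ)
  | [], _, _ => []
  | Step.N :: p, x, y =>
      (if p.head? = some Step.E ∧ colVal ν x < 2*(y+1) then [(x, y+1)] else []) ++
        highPeakPts ν p x (y+1)
  | Step.E :: p, x, y => highPeakPts ν p (x+1) y
  | Step.D :: p, x, y => highPeakPts ν p (x+1) (y+1)

/-- Number of high peaks of `π` relative to `ν`. -/
def highPeaks (ν π : List Step) : ℕ := (highPeakPts ν π 0 0).length

/-- j-th ν-Narayana number: number of ν-Dyck paths with exactly `j` valleys. -/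
noncomputable def Nar (ν : List Step) (j : ℕ) : ℕ :=
  Nat.card {π : List Step // IsNuDyck ν π ∧ valleys π = j}

/-- Number of small ν-Schröder paths with exactly `i` diagonal steps. -/
noncomputable def schNum (ν : List Step) (i : ℕ) : ℕ :=
  Nat.card {π : List Step // IsSmallSchroder ν π ∧ π.count Step.D = i}

/-- `lowH ν x` is the lowest height of a point of `ν` at abscissa `x`. -/
def lowH : List Step → ℕ → ℕ
  | _, 0 => 0
  | [], _+1 => 0
  | Step.N :: p, x+1 => lowH p (x+1) + 1
  | Step.E :: p, x+1 => lowH p x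
  | Step.D :: p, x+1 => lowH p x + 1

/-- The lowest lattice path from `(0,0)` to `(b,a)` weakly above the line segment
from `(0,0)` to `(b,a)`. -/
def nuAB (a b : ℕ) : List Step :=
  (List.range b).flatMap (fun x =>
    List.replicate (((x+1)*a + b - 1)/b - (x*a + b - 1)/b) Step.N ++ [Step.E])

/-- Number of large rational `(a,b)`-Schröder paths with `i` diagonal steps. -/
noncomputable def largeCount (a b i : ℕ) : ℕ :=
  Nat.card {π : List Step // IsLargeSchroder (nuAB a b) π ∧ π.count Step.D = i}

/-- Number of small rational `(a,b)`-Schröder paths with `i` diagonal steps. -/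
noncomputable def smallCount (a b i : ℕ) : ℕ :=
  Nat.card {π : List Step // IsSmallSchroder (nuAB a b) π ∧ π.count Step.D = i}

/-- Binomial coefficient with an integer lower entry (zero when negative). -/
def chooseZ (n : ℕ) (k : ℤ) : ℕ := if 0 ≤ k then n.choose k.toNat else 0

/-- The region weakly above `ν` in the rectangle `[0,b] × [0,a]`. -/
def InRegion (ν : List Step) (p : ℕ × ℕ) : Prop :=
  p.1 ≤ eLen ν ∧ p.2 ≤ nLen ν ∧ lowH ν p.1 ≤ p.2

/-- Two points of the region are ν-incompatible if one is strictly southwest of the other and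
the rectangle they span lies in the region (equivalently its bottom-right corner does). -/
def Incompat (ν : List Step) (p q : ℕ × ℕ) : Prop :=
  ((p.1 < q.1 ∧ p.2 < q.2) ∨ (q.1 < p.1 ∧ q.2 < p.2)) ∧
    InRegion ν (max p.1 q.1, min p.2 q.2)

/-- A ν-binary tree: a maximal set of pairwise ν-compatible points of the region. -/
def IsBinaryTree (ν : List Step) (T : Finset (ℕ × ℕ)) : Prop :=
  (∀ p ∈ T, InRegion ν p) ∧ (∀ p ∈ T, ∀ q ∈ T, ¬ Incompat ν p q) ∧
    ∀ r, InRegion ν r → (∀ p ∈ T, ¬ Incompat ν r p) → r ∈ T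

/-- A ν-Schröder tree: pairwise ν-compatible points of the region containing the root
`(0,a)` and meeting every row and every column. -/
def IsSchroderTree (ν : List Step) (T : Finset (ℕ × ℕ)) : Prop :=
  (∀ p ∈ T, InRegion ν p) ∧ (∀ p ∈ T, ∀ q ∈ T, ¬ Incompat ν p q) ∧
    (0, nLen ν) ∈ T ∧ (∀ y ≤ nLen ν, ∃ p ∈ T, p.2 = y) ∧ (∀ x ≤ eLen ν, ∃ p ∈ T, p.1 = x)

/-- One contraction step: delete a node, provided the result is still a ν-Schröder tree. -/
def ContractStep (ν : List Step) (T T' : Finset (ℕ × ℕ)) : Prop :=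
  ∃ q ∈ T, T' = T.erase q ∧ IsSchroderTree ν T'

/-- `p` is a leaf of the (plane tree associated to the) node set `T`: no node strictly below
it in its column and none strictly to its right in its row. -/
def IsLeafIn (T : Finset (ℕ × ℕ)) (p : ℕ × ℕ) : Prop :=
  (∀ q ∈ T, ¬(q.1 = p.1 ∧ q.2 < p.2)) ∧ (∀ q ∈ T, ¬(q.2 = p.2 ∧ p.1 < q.1))

/-- Starting points of vertical runs and ending points of horizontal runs of `ν`. -/
def leafPts (ν : List Step) : Finset (ℕ × ℕ) :=
  (valleyPts ν 0 0).toFinset ∪ (if ν.head? = some Step.N then {((0 : ℕ), (0 : ℕ))} else ∅) ∪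
    (if ν.getLast? = some Step.E then {(eLen ν, nLen ν)} else ∅)

/-- `horizNu ν x y`: maximal number of east steps that can be placed starting at `(x,y)`
before crossing `ν` (staying within the bounding rectangle). -/
def horizNu (ν : List Step) (x y : ℕ) : ℕ :=
  ((Finset.Icc 1 (eLen ν - x)).filter (fun k => lowH ν (x + k) ≤ y)).card

/-- No `N` step of the given path (started at `(x,y)`) has initial point with
`horizNu`-value `h`. -/
def noNAt (ν : List Step) (h : ℕ) : List Step → ℕ → ℕ → Prop
  | [], _, _ => True
  | Step.N :: p, x, y => horizNu ν x y ≠ h ∧ noNAt ν h p x (y+1)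
  | Step.E :: p, x, y => noNAt ν h p (x+1) y
  | Step.D :: p, x, y => noNAt ν h p (x+1) (y+1)

/-- Right contraction: replace a consecutive `EN` pair (a valley) by a `D` step. -/
def RightC (μ lam : List Step) : Prop :=
  ∃ p q, μ = p ++ Step.E :: Step.N :: q ∧ lam = p ++ Step.D :: q

/-- Left contraction: delete an `E` step together with the most recent preceding `N` step
whose initial point has the same `horizNu` statistic as the initial point of the `E` step,
shift the intermediate subpath, and place a `D` step at the initial point of the `N` step. -/
def LeftC (ν μ lam : List Step) : Prop :=
  ∃ p m q, μ = p ++ Step.N :: (m ++ Step.E :: q) ∧ lam = p ++ Step.D :: (m ++ q) ∧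
    horizNu ν (eLen p) (nLen p)
      = horizNu ν (eLen (p ++ Step.N :: m)) (nLen (p ++ Step.N :: m)) ∧
    noNAt ν (horizNu ν (eLen (p ++ Step.N :: m)) (nLen (p ++ Step.N :: m)))
      m (eLen p) (nLen p + 1)

/-- Diagonal contraction: delete an `E` step ending at the initial point `r` of a `D` step,
together with the most recent preceding `N` step whose initial point `s` satisfies
`horizNu s = horizNu r`, shift the intermediate subpath, and place a `D` step at `s`. -/
def DiagC (ν μ lam : List Step) : Prop :=
  ∃ p m q, μ = p ++ Step.N :: (m ++ Step.E :: Step.D :: q) ∧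
    lam = p ++ Step.D :: (m ++ Step.D :: q) ∧
    horizNu ν (eLen p) (nLen p)
      = horizNu ν (eLen (p ++ Step.N :: m) + 1) (nLen (p ++ Step.N :: m)) ∧
    noNAt ν (horizNu ν (eLen (p ++ Step.N :: m) + 1) (nLen (p ++ Step.N :: m)))
      m (eLen p) (nLen p + 1)

/-- Cover relation of the contraction poset of ν-Schröder paths. -/
def Covers (ν μ lam : List Step) : Prop :=
  IsSmallSchroder ν μ ∧ IsSmallSchroder ν lam ∧
    (RightC μ lam ∨ LeftC ν μ lam ∨ DiagC ν μ lam)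

/-- The Morse matching: `σ` (having a `D` step preceded by no valley) is matched with the
path `π` obtained by replacing the first such `D` step by `EN`. -/
def MorseM (ν : List Step) : Set (List Step × List Step) :=
  { z | ∃ p q, Step.D ∉ p ∧ valleys p = 0 ∧
      z.2 = p ++ Step.D :: q ∧ z.1 = p ++ Step.E :: Step.N :: q ∧ IsSmallSchroder ν z.2 }

/-- Twice the area between a small ν-Schröder path and `ν`. -/
def area2 (ν π : List Step) : ℕ :=
  ∑ x ∈ Finset.range (eLen ν), (colVal π x - colVal ν x)

/-- An `(I,J̄)`-forest: increasing, non-crossing arcs. -/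
def IsIJForest (I J : Finset ℕ) (F : Finset (ℕ × ℕ)) : Prop :=
  (∀ a ∈ F, a.1 ∈ I ∧ a.2 ∈ J ∧ a.1 < a.2) ∧
    (∀ a ∈ F, ∀ a' ∈ F, ¬(a.1 < a'.1 ∧ a'.1 < a.2 ∧ a.2 < a'.2))

/-- A covering `(I,J̄)`-forest: contains the arc `(1,n)` and has no isolated node. -/
def IsCoveringForest (n : ℕ) (I J : Finset ℕ) (F : Finset (ℕ × ℕ)) : Prop :=
  IsIJForest I J F ∧ (1, n) ∈ F ∧
    (∀ i ∈ I, ∃ a ∈ F, a.1 = i) ∧ (∀ j ∈ J, ∃ a ∈ F, a.2 = j)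

/-- The lattice path read off from the interleaving of `I` and `J̄` (elements `2,…,n-1`,
`E` for elements of `I`, `N` for the others). -/
def nuOf (n : ℕ) (I : Finset ℕ) : List Step :=
  (List.range' 2 (n - 2)).map (fun k => if k ∈ I then Step.E else Step.N)
/-! ### Auxiliary development -/

namespace SchroderAux

instance : Fintype Step :=
  ⟨{Step.N, Step.E, Step.D}, by intro a; cases a <;> simp⟩

/-- Expand each diagonal step into an `E` step followed by an `N` step (a valley). -/
def expand : List Step → List Step
  | [] => []
  | Step.D :: p => Step.E :: Step.N :: expand p
  | Step.N :: p => Step.N :: expand p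
  | Step.E :: p => Step.E :: expand p

lemma count_expand_N (σ : List Step) :
    (expand σ).count Step.N = σ.count Step.N + σ.count Step.D := by
  induction σ with
  | nil => rfl
  | cons a p ih => cases a <;> simp [expand, List.count_cons, ih] <;> omega

lemma count_expand_E (σ : List Step) :
    (expand σ).count Step.E = σ.count Step.E + σ.count Step.D := by
  induction σ with
  | nil => rfl
  | cons a p ih => cases a <;> simp [expand, List.count_cons, ih] <;> omega

lemma not_D_mem_expand (σ : List Step) : Step.D ∉ expand σ := by
  induction σ with
  | nil => simp [expand]
  | cons a p ih => cases a <;> simp [expand, ih]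

lemma eLen_expand (σ : List Step) : eLen (expand σ) = eLen σ := by
  have := List.count_eq_zero_of_not_mem (not_D_mem_expand σ)
  simp [eLen, count_expand_E, this]

lemma nLen_expand (σ : List Step) : nLen (expand σ) = nLen σ := by
  have := List.count_eq_zero_of_not_mem (not_D_mem_expand σ)
  simp [nLen, count_expand_N, this]

lemma colVal_expand (σ : List Step) (x : ℕ) :
    colVal (expand σ) x = colVal σ x ∨ colVal (expand σ) x + 1 = colVal σ x := by
  induction σ generalizing x with
  | nil => left; rfl
  | cons a p ih =>
    cases a with
    | N => simp only [expand, colVal]; rcases ih x with h | h <;> omega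
    | E =>
      cases x with
      | zero => left; rfl
      | succ x => simpa only [expand, colVal] using ih x
    | D =>
      cases x with
      | zero => right; rfl
      | succ x => simp only [expand, colVal]; rcases ih x with h | h <;> omega

lemma colVal_even {ν : List Step} (hν : Step.D ∉ ν) (x : ℕ) : 2 ∣ colVal ν x := by
  induction ν generalizing x with
  | nil => simp [colVal]
  | cons a p ih =>
    have hp : Step.D ∉ p := fun h => hν (List.mem_cons_of_mem _ h)
    cases a with
    | N => have := ih hp x; simp only [colVal]; omega
    | E =>
      cases x with
      | zero => simp [colVal]
      | succ x => simpa only [colVal] using ih hp x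
    | D => exact absurd List.mem_cons_self hν

lemma weaklyAbove_expand_iff {ν : List Step} (hν : Step.D ∉ ν) (σ : List Step) :
    WeaklyAbove (expand σ) ν ↔ WeaklyAbove σ ν := by
  constructor
  · intro h x
    have h1 := h x
    rcases colVal_expand σ x with h2 | h2 <;> omega
  · intro h x
    have h1 := h x
    obtain ⟨k, hk⟩ := colVal_even hν x
    obtain ⟨m, hm⟩ := colVal_even (not_D_mem_expand σ) x
    rcases colVal_expand σ x with h2 | h2 <;> omega

lemma schroder_iff_dyck (ν : List Step) (hν : Step.D ∉ ν) (σ : List Step) :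
    IsSmallSchroder ν σ ↔ IsNuDyck ν (expand σ) := by
  unfold IsSmallSchroder IsNuDyck
  rw [eLen_expand, nLen_expand, weaklyAbove_expand_iff hν]
  have := not_D_mem_expand σ
  tauto

end SchroderAux
namespace SchroderAux

lemma valleys_cons (a : Step) (p : List Step) :
    valleys (a :: p) =
      (if a = Step.E ∧ p.head? = some Step.N then 1 else 0) + valleys p := by
  cases p with
  | nil => simp [valleys]
  | cons b q =>
    show ((a, b) :: (b :: q).zip q).count (Step.E, Step.N) = _
    rw [List.count_cons]
    rcases a <;> rcases b <;> simp [valleys] <;> omega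

lemma valleys_le (p : List Step) : valleys p ≤ p.count Step.E := by
  induction p with
  | nil => simp [valleys]
  | cons a p ih =>
    rw [valleys_cons, List.count_cons]
    by_cases hE : a = Step.E
    · subst hE; simp; split_ifs <;> omega
    · have : (Step.E == a) = False := by cases a <;> simp_all
      simp [this, hE]
      omega

/-- All preimages of a path under `expand`. -/
def preims : List Step → List (List Step)
  | [] => [[]]
  | Step.N :: p => (preims p).map (Step.N :: ·)
  | Step.D :: _ => []
  | [Step.E] => [[Step.E]]
  | Step.E :: Step.N :: p =>
      (preims p).map (Step.D :: ·) ++ (preims p).map (fun τ => Step.E :: Step.N :: τ)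
  | Step.E :: Step.E :: p => (preims (Step.E :: p)).map (Step.E :: ·)
  | Step.E :: Step.D :: _ => []
termination_by l => l.length

lemma expand_of_mem : ∀ π σ : List Step, σ ∈ preims π → expand σ = π := by
  intro π
  induction π using preims.induct with
  | case1 => intro σ h; simp [preims] at h; subst h; rfl
  | case2 p ih =>
    intro σ h
    simp only [preims, List.mem_map] at h
    obtain ⟨τ, hτ, rfl⟩ := h
    simp [expand, ih τ hτ]
  | case3 => intro σ h; simp [preims] at h
  | case4 => intro σ h; simp [preims] at h; subst h; rfl
  | case5 p ih =>
    intro σ h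
    simp only [preims, List.mem_append, List.mem_map] at h
    rcases h with ⟨τ, hτ, rfl⟩ | ⟨τ, hτ, rfl⟩ <;> simp [expand, ih τ hτ]
  | case6 p ih =>
    intro σ h
    simp only [preims, List.mem_map] at h
    obtain ⟨τ, hτ, rfl⟩ := h
    simp [expand, ih τ hτ]
  | case7 => intro σ h; simp [preims] at h

lemma self_mem_preims : ∀ σ : List Step, σ ∈ preims (expand σ) := by
  intro σ
  induction σ with
  | nil => simp [expand, preims]
  | cons a p ih =>
    cases a with
    | N =>
      simp only [expand, preims, List.mem_map]
      exact ⟨p, ih, rfl⟩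
    | D =>
      simp only [expand, preims, List.mem_append, List.mem_map]
      exact Or.inl ⟨p, ih, rfl⟩
    | E =>
      cases hq : expand p with
      | nil =>
        rw [hq] at ih
        simp [preims] at ih
        subst ih
        simp [expand, preims]
      | cons b q =>
        rw [hq] at ih
        cases b with
        | N =>
          have : Step.E :: p ∈ preims (Step.E :: Step.N :: q) := by
            simp only [preims, List.mem_map] at ih
            obtain ⟨τ, hτ, hp⟩ := ih
            simp only [preims, List.mem_append, List.mem_map]
            exact Or.inr ⟨τ, hτ, by rw [hp]⟩
          simpa only [expand, hq] using this
        | E =>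
          have : Step.E :: p ∈ preims (Step.E :: Step.E :: q) := by
            simp only [preims, List.mem_map]
            exact ⟨p, ih, rfl⟩
          simpa only [expand, hq] using this
        | D => simp [preims] at ih

lemma mem_preims {π σ : List Step} : σ ∈ preims π ↔ expand σ = π :=
  ⟨expand_of_mem π σ, fun h => h ▸ self_mem_preims σ⟩

lemma preims_nodup : ∀ π : List Step, (preims π).Nodup := by
  intro π
  induction π using preims.induct with
  | case1 => simp [preims]
  | case2 p ih => simp only [preims]; exact ih.map (List.cons_injective (a := Step.N))
  | case3 => simp [preims]
  | case4 => simp [preims]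
  | case5 p ih =>
    simp only [preims]
    refine List.Nodup.append (ih.map (List.cons_injective (a := Step.D)))
      (ih.map (List.cons_injective.comp List.cons_injective :
        Function.Injective fun τ => Step.E :: Step.N :: τ)) ?_
    intro a h1 h2
    simp only [List.mem_map] at h1 h2
    obtain ⟨τ, _, rfl⟩ := h1
    obtain ⟨τ', _, h⟩ := h2
    simp at h
  | case6 p ih => simp only [preims]; exact ih.map (List.cons_injective (a := Step.E))
  | case7 => simp [preims]

end SchroderAux
namespace SchroderAux

/-- Number of preimages with exactly `i` diagonal steps. -/
def cnt (π : List Step) (i : ℕ) : ℕ := (preims π).countP (fun σ => σ.count Step.D == i)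

lemma cnt_eq : ∀ π : List Step, Step.D ∉ π → ∀ i, cnt π i = (valleys π).choose i := by
  intro π
  induction π using preims.induct with
  | case1 =>
    intro _ i
    have hv : valleys ([] : List Step) = 0 := by decide
    unfold cnt
    simp only [preims, hv]
    cases i <;> simp [Nat.choose_zero_succ]
  | case2 p ih =>
    intro h i
    have hp : Step.D ∉ p := by simp at h; exact h
    have h1 : cnt (Step.N :: p) i = cnt p i := by
      unfold cnt
      simp only [preims, List.countP_map]
      apply List.countP_congr
      intro τ _
      simp [List.count_cons]
    have hv : valleys (Step.N :: p) = valleys p := by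
      rw [valleys_cons]; simp
    rw [h1, ih hp i, hv]
  | case3 => intro h; simp at h
  | case4 =>
    intro _ i
    have hv : valleys [Step.E] = 0 := by decide
    unfold cnt
    simp only [preims, hv]
    cases i <;> simp [Nat.choose_zero_succ]
  | case5 p ih =>
    intro h i
    have hp : Step.D ∉ p := by simp at h; tauto
    have hv : valleys (Step.E :: Step.N :: p) = valleys p + 1 := by
      rw [valleys_cons, valleys_cons]; simp; omega
    unfold cnt
    simp only [preims, List.countP_append, List.countP_map]
    have h1 : List.countP ((fun σ => σ.count Step.D == i) ∘ (Step.D :: ·)) (preims p)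
        = List.countP (fun τ => τ.count Step.D + 1 == i) (preims p) := by
      apply List.countP_congr; intro τ _; simp [List.count_cons]
    have h2 : List.countP ((fun σ => σ.count Step.D == i) ∘ fun τ => Step.E :: Step.N :: τ)
        (preims p) = cnt p i := by
      unfold cnt; apply List.countP_congr; intro τ _; simp [List.count_cons]
    rw [h1, h2, hv]
    cases i with
    | zero =>
      have h3 : List.countP (fun τ => τ.count Step.D + 1 == 0) (preims p) = 0 := by
        apply List.countP_eq_zero.mpr; intro τ _; simp
      rw [h3, ih hp 0]; simp
    | succ i =>
      have h3 : List.countP (fun τ => τ.count Step.D + 1 == i + 1) (preims p) = cnt p i := by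
        unfold cnt; apply List.countP_congr; intro τ _; simp
      rw [h3, ih hp i, ih hp (i+1), Nat.choose_succ_succ]
  | case6 p ih =>
    intro h i
    have hp : Step.D ∉ Step.E :: p := by simp at h ⊢; tauto
    have h1 : cnt (Step.E :: Step.E :: p) i = cnt (Step.E :: p) i := by
      unfold cnt
      simp only [preims, List.countP_map]
      apply List.countP_congr
      intro τ _
      simp [List.count_cons]
    have hv : valleys (Step.E :: Step.E :: p) = valleys (Step.E :: p) := by
      rw [valleys_cons]; simp
    rw [h1, ih hp i, hv]
  | case7 => intro h; simp at h

lemma fiber_card (π : List Step) (hπ : Step.D ∉ π) (i : ℕ) :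
    Nat.card {σ : List Step // expand σ = π ∧ σ.count Step.D = i}
      = (valleys π).choose i := by
  classical
  have hset : ∀ σ : List Step, (expand σ = π ∧ σ.count Step.D = i) ↔
      σ ∈ ((preims π).filter (fun σ => σ.count Step.D == i)).toFinset := by
    intro σ
    simp [List.mem_filter, mem_preims]
  rw [Nat.card_congr (Equiv.subtypeEquivRight hset), Nat.card_eq_fintype_card,
    Fintype.card_coe, List.toFinset_card_of_nodup ((preims_nodup π).filter _),
    ← List.countP_eq_length_filter, ← cnt, cnt_eq π hπ i]

end SchroderAux
namespace SchroderAux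

lemma schNum_eq (ν : List Step) (hν : Step.D ∉ ν) (i : ℕ) :
    schNum ν i = ∑ j ∈ Finset.range (eLen ν + 1), Nar ν j * j.choose i := by
  classical
  have length_eq : ∀ l : List Step,
      l.count Step.N + l.count Step.E + l.count Step.D = l.length := by
    intro l
    induction l with
    | nil => rfl
    | cons a p ih => cases a <;> simp [List.count_cons] <;> omega
  have hDyFin : Finite {π : List Step // IsNuDyck ν π} := by
    apply Set.Finite.to_subtype (s := {π | IsNuDyck ν π})
    apply (List.finite_length_le Step (eLen ν + nLen ν)).subset
    rintro π ⟨hD, he, hn, -⟩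
    have h1 := length_eq π
    simp only [Set.mem_setOf_eq]
    have h2 : π.length ≤ eLen π + nLen π := by unfold eLen nLen; omega
    rw [he, hn] at h2; exact h2
  letI : Fintype {π : List Step // IsNuDyck ν π} := Fintype.ofFinite _
  haveI hfib : ∀ π : List Step, Finite {σ : List Step // expand σ = π ∧ σ.count Step.D = i} :=
    fun π => Set.Finite.to_subtype
      (((preims π).finite_toSet).subset (fun σ hσ => mem_preims.mpr hσ.1))
  letI : ∀ π : {π : List Step // IsNuDyck ν π},
      Fintype {σ : List Step // expand σ = π.1 ∧ σ.count Step.D = i} :=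
    fun π => Fintype.ofFinite _
  have e : {σ : List Step // IsSmallSchroder ν σ ∧ σ.count Step.D = i}
      ≃ Σ π : {π : List Step // IsNuDyck ν π},
          {σ : List Step // expand σ = π.1 ∧ σ.count Step.D = i} :=
    { toFun := fun σ => ⟨⟨expand σ.1, (schroder_iff_dyck ν hν σ.1).1 σ.2.1⟩, ⟨σ.1, rfl, σ.2.2⟩⟩
      invFun := fun x => ⟨x.2.1,
        (schroder_iff_dyck ν hν x.2.1).2 (by rw [x.2.2.1]; exact x.1.2), x.2.2.2⟩
      left_inv := fun σ => rfl
      right_inv := fun x => by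
        refine Sigma.ext (Subtype.ext x.2.2.1) ?_
        refine (Subtype.heq_iff_coe_eq ?_).mpr rfl
        intro σ
        dsimp only
        rw [x.2.2.1] }
  have step1 : ∀ π : {π : List Step // IsNuDyck ν π},
      Fintype.card {σ : List Step // expand σ = π.1 ∧ σ.count Step.D = i}
        = (valleys π.1).choose i := fun π => by
    rw [← Nat.card_eq_fintype_card]; exact fiber_card π.1 π.2.1 i
  have hval : ∀ π : {π : List Step // IsNuDyck ν π},
      valleys π.1 ∈ Finset.range (eLen ν + 1) := by
    rintro ⟨π, hD, he, hn, -⟩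
    simp only [Finset.mem_range]
    have h1 := valleys_le π
    have h2 : π.count Step.D = 0 := List.count_eq_zero_of_not_mem hD
    have h3 : π.count Step.E ≤ eLen ν := by rw [← he]; unfold eLen; omega
    omega
  rw [schNum, Nat.card_congr e, Nat.card_eq_fintype_card, Fintype.card_sigma]
  simp only [step1]
  rw [← Finset.sum_fiberwise_of_maps_to (fun π _ => hval π)
    (fun π => (valleys π.1).choose i)]
  refine Finset.sum_congr rfl fun j hj => ?_
  rw [Finset.sum_congr rfl (fun π hπ => by
      rw [(Finset.mem_filter.mp hπ).2] :
      ∀ π ∈ Finset.univ.filter (fun π : {π : List Step // IsNuDyck ν π} => valleys π.1 = j),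
        (valleys π.1).choose i = j.choose i),
    Finset.sum_const, smul_eq_mul]
  congr 1
  rw [Nar, Nat.card_congr
      (Equiv.subtypeSubtypeEquivSubtypeInter (IsNuDyck ν) (valleys · = j)).symm,
    Nat.card_eq_fintype_card, Fintype.card_subtype]

end SchroderAux

/-- If ν begins with a north step and ends with an east step, then
`N_ν(x+1) = Σ_i sch_ν(i) xⁱ`, where `N_ν` is the ν-Narayana polynomial. -/
theorem narayana_shift_eq_schroder (ν : List Step) (hν : IsLatticePath ν)
    (hhead : ν.head? = some Step.N) (hlast : ν.getLast? = some Step.E) (x : ℕ) :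
    ∑ j ∈ Finset.range (eLen ν + 1), Nar ν j * (x + 1)^j
      = ∑ i ∈ Finset.range (eLen ν + 1), schNum ν i * x^i := by
  have hD : Step.D ∉ ν := hν
  have key : ∀ j ∈ Finset.range (eLen ν + 1), (x + 1)^j
      = ∑ i ∈ Finset.range (eLen ν + 1), j.choose i * x^i := by
    intro j hj
    rw [add_pow, Finset.sum_subset (Finset.range_subset_range.mpr (Finset.mem_range.mp hj))]
    · refine Finset.sum_congr rfl fun i _ => ?_
      simp [Nat.cast_id]
      ring
    · intro i _ hi
      have h1 : j < i := by simp only [Finset.mem_range] at hi; omega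
      simp [Nat.choose_eq_zero_of_lt h1]
  calc ∑ j ∈ Finset.range (eLen ν + 1), Nar ν j * (x + 1)^j
      = ∑ j ∈ Finset.range (eLen ν + 1), ∑ i ∈ Finset.range (eLen ν + 1),
          Nar ν j * (j.choose i * x^i) := by
        refine Finset.sum_congr rfl fun j hj => ?_
        rw [key j hj, Finset.mul_sum]
    _ = ∑ i ∈ Finset.range (eLen ν + 1), ∑ j ∈ Finset.range (eLen ν + 1),
          Nar ν j * (j.choose i * x^i) := Finset.sum_comm
    _ = ∑ i ∈ Finset.range (eLen ν + 1), schNum ν i * x^i := by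
        refine Finset.sum_congr rfl fun i _ => ?_
        rw [SchroderAux.schNum_eq ν hD i, Finset.sum_mul]
        refine Finset.sum_congr rfl fun j _ => ?_
        ring
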